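/- There exist absolute constants c, C > 0 such that for all integers j₁ ≥ 1 and j₀ ≥ j₁ + 10, the function ρ := 2^{j₀} 1_{[0,2^{−j₀}]} − 2^{j₁} 1_{[0,2^{−j₁}]} ∈ L¹(ℝ) ∩ L²(ℝ) satisfies c 2^{−j₁/2} ≤ ‖ρ‖_{H^{−1}} ≤ C 2^{−j₁/2}. -/

import Mathlib

open MeasureTheory Metric Filter

noncomputable section

/-- The Fourier transform `ρ̂(ξ) = ∫ e^{-2πi x ξ} ρ(x) dx` of a real-valued function on ℝ. -/
def FT1 (ρ : ℝ → ℝ) (ξ : ℝ) : ℂ :=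
  ∫ x : ℝ, Complex.exp (-(2 * Real.pi * (x * ξ)) * Complex.I) * (ρ x : ℂ)

/-- The `H^{-1}(ℝ)` norm `‖ρ‖_{H^{-1}} = (∫ (1+|ξ|²)⁻¹ |ρ̂(ξ)|² dξ)^{1/2}`. -/
def Hneg1 (ρ : ℝ → ℝ) : ℝ :=
  (∫ ξ : ℝ, (1 + ξ ^ 2)⁻¹ * ‖FT1 ρ ξ‖ ^ 2) ^ (1/2 : ℝ)

/-- The geometric mixing functional with ball averages on ℝ:
`𝔤_{r₀}[ρ] = sup { |B_r(x)|⁻¹ |∫_{B_r(x)} ρ| : x ∈ ℝ, r ≥ r₀ }` with `B_r(x) = (x-r, x+r)`. -/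
def gball1 (ρ : ℝ → ℝ) (r₀ : ℝ) : ℝ :=
  ⨆ p : {q : ℝ × ℝ // r₀ ≤ q.2},
    |∫ y in ball p.1.1 p.1.2, ρ y| / (volume (ball p.1.1 p.1.2)).toReal

/-- auxiliary: the normalized Fourier transform of a unit bump. -/
def gfun (t : ℝ) : ℂ :=
  (Complex.exp ((-(2*Real.pi*t) : ℝ) * Complex.I) - 1) / (((-(2*Real.pi*t) : ℝ) : ℂ) * Complex.I)

end

lemma measurable_gfun : Measurable gfun := by
  unfold gfun
  fun_prop

lemma norm_expI_sub_one_le (θ : ℝ) : ‖Complex.exp ((θ:ℂ) * Complex.I) - 1‖ ≤ |θ| := by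
  have h : Complex.exp ((θ:ℂ) * Complex.I) - 1
      = ((Real.cos θ - 1 : ℝ) : ℂ) + ((Real.sin θ : ℝ) : ℂ) * Complex.I := by
    rw [Complex.exp_mul_I]; push_cast; ring
  rw [h, Complex.norm_add_mul_I]
  rw [show |θ| = Real.sqrt (θ^2) by rw [Real.sqrt_sq_eq_abs]]
  apply Real.sqrt_le_sqrt
  nlinarith [Real.sin_sq_add_cos_sq θ, Real.one_sub_sq_div_two_le_cos (x := θ)]

lemma norm_expI_sub_one_le_two (θ : ℝ) : ‖Complex.exp ((θ:ℂ) * Complex.I) - 1‖ ≤ 2 := by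
  calc ‖Complex.exp ((θ:ℂ) * Complex.I) - 1‖ ≤ ‖Complex.exp ((θ:ℂ) * Complex.I)‖ + ‖(1:ℂ)‖ :=
        norm_sub_le _ _
    _ ≤ 2 := by rw [Complex.norm_exp_ofReal_mul_I]; norm_num

lemma denom_norm (t : ℝ) : ‖(((-(2*Real.pi*t) : ℝ) : ℂ) * Complex.I)‖ = 2*Real.pi*|t| := by
  rw [norm_mul, Complex.norm_real, Complex.norm_I, mul_one, Real.norm_eq_abs, abs_neg, abs_mul]
  rw [abs_of_pos (by positivity : (0:ℝ) < 2*Real.pi)]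

lemma denom_ne (t : ℝ) (ht : t ≠ 0) : (((-(2*Real.pi*t) : ℝ) : ℂ) * Complex.I) ≠ 0 := by
  simp [Complex.I_ne_zero, Real.pi_ne_zero, ht]

lemma norm_gfun_le_one (t : ℝ) (ht : t ≠ 0) : ‖gfun t‖ ≤ 1 := by
  rw [gfun, norm_div, denom_norm]
  rw [div_le_one (by positivity)]
  have := norm_expI_sub_one_le (-(2*Real.pi*t))
  rw [show |(-(2*Real.pi*t))| = 2*Real.pi*|t| by
    rw [abs_neg, abs_mul, abs_of_pos (by positivity : (0:ℝ) < 2*Real.pi)]] at this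
  simpa using this

lemma norm_gfun_le_inv_pi (t : ℝ) (ht : 1 ≤ t) : ‖gfun t‖ ≤ 1/Real.pi := by
  rw [gfun, norm_div, denom_norm]
  have h2 := norm_expI_sub_one_le_two (-(2*Real.pi*t))
  have hpi := Real.pi_pos
  have h1 : |t| = t := abs_of_pos (by linarith)
  rw [h1, div_le_div_iff₀ (by positivity) (by positivity)]
  calc ‖Complex.exp ((↑(-(2*Real.pi*t)):ℂ) * Complex.I) - 1‖ * Real.pi ≤ 2 * Real.pi := by
        nlinarith
    _ ≤ 1 * (2*Real.pi*t) := by nlinarith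

lemma norm_gfun_sub_one_le_small (t : ℝ) (ht : t ≠ 0) (h : 2*Real.pi*|t| ≤ 1) :
    ‖gfun t - 1‖ ≤ 2*Real.pi*|t| := by
  set z : ℂ := ((-(2*Real.pi*t) : ℝ) : ℂ) * Complex.I with hz
  have hzne : z ≠ 0 := denom_ne t ht
  have hne : ‖z‖ = 2*Real.pi*|t| := denom_norm t
  have heq : gfun t - 1 = (Complex.exp z - 1 - z) / z := by
    rw [gfun, ← hz, div_sub_one hzne]
  rw [heq, norm_div, hne]
  have hb : ‖z‖ ≤ 1 := by rw [hne]; exact h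
  have := Complex.norm_exp_sub_one_sub_id_le hb
  have hpt : (0:ℝ) < 2*Real.pi*|t| := by
    have := Real.pi_pos; have := abs_pos.mpr ht; positivity
  calc ‖Complex.exp z - 1 - z‖ / (2*Real.pi*|t|) ≤ ‖z‖^2 / (2*Real.pi*|t|) := by
        gcongr
    _ = 2*Real.pi*|t| := by rw [hne, pow_two]; field_simp

lemma norm_gfun_sub_one_le (t : ℝ) (ht : t ≠ 0) : ‖gfun t - 1‖ ≤ 4*Real.pi*|t| := by
  have hpi := Real.pi_pos
  have htpos : 0 < |t| := abs_pos.mpr ht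
  by_cases h : 2*Real.pi*|t| ≤ 1
  · calc ‖gfun t - 1‖ ≤ 2*Real.pi*|t| := norm_gfun_sub_one_le_small t ht h
      _ ≤ 4*Real.pi*|t| := by nlinarith
  · push_neg at h
    calc ‖gfun t - 1‖ ≤ ‖gfun t‖ + ‖(1:ℂ)‖ := norm_sub_le _ _
      _ ≤ 2 := by have := norm_gfun_le_one t ht; rw [norm_one]; linarith
      _ ≤ 4*Real.pi*|t| := by nlinarith

lemma indicator_eq (a ξ : ℝ) (x : ℝ) :
    Complex.exp (-(2 * Real.pi * (x * ξ)) * Complex.I)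
        * ((Set.indicator (Set.Icc (0:ℝ) a) (fun _ => (1:ℝ)) x : ℝ) : ℂ)
      = Set.indicator (Set.Icc (0:ℝ) a)
          (fun y : ℝ => Complex.exp ((-(2 * Real.pi * ξ) : ℂ) * Complex.I * y)) x := by
  by_cases hx : x ∈ Set.Icc (0:ℝ) a
  · rw [Set.indicator_of_mem hx, Set.indicator_of_mem hx]
    push_cast
    rw [mul_one]
    congr 1
    ring
  · rw [Set.indicator_of_notMem hx, Set.indicator_of_notMem hx]
    push_cast
    rw [mul_zero]

lemma integrable_bump (a ξ : ℝ) :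
    Integrable (fun x : ℝ => Complex.exp (-(2 * Real.pi * (x * ξ)) * Complex.I)
        * ((Set.indicator (Set.Icc (0:ℝ) a) (fun _ => (1:ℝ)) x : ℝ) : ℂ)) := by
  simp_rw [indicator_eq]
  apply MeasureTheory.IntegrableOn.integrable_indicator ?_ measurableSet_Icc
  exact (Complex.continuous_exp.comp ((continuous_const.mul Complex.continuous_ofReal))).integrableOn_Icc

lemma bump_ft (a ξ : ℝ) (ha : 0 < a) (hξ : ξ ≠ 0) :
    (∫ x : ℝ, Complex.exp (-(2 * Real.pi * (x * ξ)) * Complex.I)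
        * ((Set.indicator (Set.Icc (0:ℝ) a) (fun _ => (1:ℝ)) x : ℝ) : ℂ))
      = (a : ℂ) * gfun (a * ξ) := by
  have hpi := Real.pi_ne_zero
  set cc : ℂ := (-(2 * Real.pi * ξ) : ℂ) * Complex.I with hcc
  have hccne : cc ≠ 0 := by
    simp [hcc, Complex.I_ne_zero, Complex.ext_iff, Real.pi_ne_zero, hξ]
  simp_rw [indicator_eq a ξ]
  rw [MeasureTheory.integral_indicator measurableSet_Icc,
    MeasureTheory.integral_Icc_eq_integral_Ioc,
    ← intervalIntegral.integral_of_le ha.le,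
    integral_exp_mul_complex hccne]
  have hden : ((-(2*Real.pi*(a*ξ)) : ℝ) : ℂ) * Complex.I = cc * a := by push_cast; ring
  rw [gfun, hden]
  norm_num
  have hane : (a:ℂ) ≠ 0 := by exact_mod_cast ha.ne'
  field_simp

lemma two_pow_mul (j : ℕ) : (2:ℝ)^(j:ℕ) * (2:ℝ)^(-(j:ℝ)) = 1 := by
  rw [← Real.rpow_natCast 2 j, ← Real.rpow_add two_pos]
  simp

lemma ft_formula (j₀ j₁ : ℕ) (ξ : ℝ) (hξ : ξ ≠ 0) :
    FT1 (fun x => (2:ℝ) ^ (j₀:ℕ) * Set.indicator (Set.Icc (0:ℝ) ((2:ℝ) ^ (-(j₀:ℝ)))) (fun _ => (1:ℝ)) x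
        - (2:ℝ) ^ (j₁:ℕ) * Set.indicator (Set.Icc (0:ℝ) ((2:ℝ) ^ (-(j₁:ℝ)))) (fun _ => (1:ℝ)) x) ξ
      = gfun ((2:ℝ) ^ (-(j₀:ℝ)) * ξ) - gfun ((2:ℝ) ^ (-(j₁:ℝ)) * ξ) := by
  have ha₀ : (0:ℝ) < (2:ℝ) ^ (-(j₀:ℝ)) := Real.rpow_pos_of_pos two_pos _
  have ha₁ : (0:ℝ) < (2:ℝ) ^ (-(j₁:ℝ)) := Real.rpow_pos_of_pos two_pos _
  have key : ∀ x : ℝ,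
      Complex.exp (-(2 * Real.pi * (x * ξ)) * Complex.I)
        * ((((2:ℝ) ^ (j₀:ℕ) * Set.indicator (Set.Icc (0:ℝ) ((2:ℝ) ^ (-(j₀:ℝ)))) (fun _ => (1:ℝ)) x
            - (2:ℝ) ^ (j₁:ℕ) * Set.indicator (Set.Icc (0:ℝ) ((2:ℝ) ^ (-(j₁:ℝ)))) (fun _ => (1:ℝ)) x : ℝ)) : ℂ)
      = ((2:ℝ)^(j₀:ℕ) : ℂ) * (Complex.exp (-(2 * Real.pi * (x * ξ)) * Complex.I)
            * ((Set.indicator (Set.Icc (0:ℝ) ((2:ℝ) ^ (-(j₀:ℝ)))) (fun _ => (1:ℝ)) x : ℝ) : ℂ))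
        - ((2:ℝ)^(j₁:ℕ) : ℂ) * (Complex.exp (-(2 * Real.pi * (x * ξ)) * Complex.I)
            * ((Set.indicator (Set.Icc (0:ℝ) ((2:ℝ) ^ (-(j₁:ℝ)))) (fun _ => (1:ℝ)) x : ℝ) : ℂ)) := by
    intro x; push_cast; ring
  rw [FT1]
  simp_rw [key]
  rw [MeasureTheory.integral_sub (((integrable_bump _ ξ)).const_mul _)
      (((integrable_bump _ ξ)).const_mul _),
    MeasureTheory.integral_const_mul, MeasureTheory.integral_const_mul,
    bump_ft _ ξ ha₀ hξ, bump_ft _ ξ ha₁ hξ]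
  have h₀ : ((2:ℂ))^(j₀:ℕ) * (((2:ℝ) ^ (-(j₀:ℝ)) : ℝ) : ℂ) = 1 := by
    exact_mod_cast congrArg (Complex.ofReal) (two_pow_mul j₀)
  have h₁ : ((2:ℂ))^(j₁:ℕ) * (((2:ℝ) ^ (-(j₁:ℝ)) : ℝ) : ℂ) = 1 := by
    exact_mod_cast congrArg (Complex.ofReal) (two_pow_mul j₁)
  rw [← mul_assoc, ← mul_assoc]
  push_cast
  push_cast at h₀ h₁
  rw [h₀, h₁, one_mul, one_mul]


set_option maxHeartbeats 2000000 in
/-- For `ρ = 2^{j₀} 1_{[0,2^{-j₀}]} - 2^{j₁} 1_{[0,2^{-j₁}]}` with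
`j₁ ≥ 1` and `j₀ ≥ j₁ + 10`, one has `‖ρ‖_{H^{-1}} ≈ 2^{-j₁/2}` with absolute constants. -/
theorem Hneg1_two_bump :
    ∃ c C : ℝ, 0 < c ∧ 0 < C ∧
      ∀ j₁ j₀ : ℕ, 1 ≤ j₁ → j₁ + 10 ≤ j₀ →
        ∀ ρ : ℝ → ℝ,
          ρ = (fun x => (2:ℝ) ^ (j₀:ℕ) * Set.indicator (Set.Icc (0:ℝ) ((2:ℝ) ^ (-(j₀:ℝ)))) (fun _ => (1:ℝ)) x
                - (2:ℝ) ^ (j₁:ℕ) * Set.indicator (Set.Icc (0:ℝ) ((2:ℝ) ^ (-(j₁:ℝ)))) (fun _ => (1:ℝ)) x) →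
          c * (2:ℝ) ^ (-(j₁:ℝ) / 2) ≤ Hneg1 ρ ∧ Hneg1 ρ ≤ C * (2:ℝ) ^ (-(j₁:ℝ) / 2) := by
  have hpi := Real.pi_pos
  have hpi3 : (3.141592:ℝ) < Real.pi := Real.pi_gt_d6
  have hpi315 : Real.pi < 3.15 := Real.pi_lt_d2
  refine ⟨1/4, 18, by norm_num, by norm_num, ?_⟩
  intro j₁ j₀ hj₁ hj₀ ρ hρ
  set a₀ : ℝ := (2:ℝ)^(-(j₀:ℝ)) with ha₀def
  set a₁ : ℝ := (2:ℝ)^(-(j₁:ℝ)) with ha₁def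
  have ha₀ : (0:ℝ) < a₀ := by rw [ha₀def]; positivity
  have ha₁ : (0:ℝ) < a₁ := by rw [ha₁def]; positivity
  have hjj : (j₁:ℝ) + 10 ≤ (j₀:ℝ) := by exact_mod_cast hj₀
  have ha01 : a₀ ≤ a₁ := by
    rw [ha₀def, ha₁def]
    apply Real.rpow_le_rpow_of_exponent_le one_le_two; linarith
  set F : ℝ → ℂ := fun ξ => gfun (a₀*ξ) - gfun (a₁*ξ) with hF
  have hform : ∀ ξ : ℝ, ξ ≠ 0 → FT1 ρ ξ = F ξ := by
    intro ξ hξ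
    rw [hρ, hF, ha₀def, ha₁def]
    exact ft_formula j₀ j₁ ξ hξ
  set R : ℝ := (2:ℝ)^(j₁:ℕ) with hR
  have hRpos : (0:ℝ) < R := by rw [hR]; positivity
  have hR2 : (2:ℝ) ≤ R := by
    rw [hR]
    calc (2:ℝ) = 2^1 := (pow_one 2).symm
      _ ≤ 2^j₁ := pow_le_pow_right₀ one_le_two hj₁
  have hRa : R * a₁ = 1 := by rw [hR, ha₁def]; exact two_pow_mul j₁
  have hsmall : a₀ * R ≤ 1/1024 := by
    have heq : a₀ * R = (2:ℝ)^(-(j₀:ℝ)+(j₁:ℝ)) := by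
      rw [hR, ha₀def, ← Real.rpow_natCast 2 j₁, ← Real.rpow_add two_pos]
    rw [heq]
    have hexp : -(j₀:ℝ)+(j₁:ℝ) ≤ -10 := by linarith
    calc (2:ℝ)^(-(j₀:ℝ)+(j₁:ℝ)) ≤ (2:ℝ)^(-10:ℝ) :=
          Real.rpow_le_rpow_of_exponent_le one_le_two hexp
      _ = 1/1024 := by
          rw [show (-10:ℝ) = -((10:ℕ):ℝ) by norm_num, Real.rpow_neg two_pos.le,
            Real.rpow_natCast]
          norm_num
  clear_value a₀ a₁ R F
  clear hρ
  set G : ℝ → ℝ := fun ξ => (1+ξ^2)⁻¹ * ‖F ξ‖^2 with hG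
  set f : ℝ → ℝ := fun ξ => (1 + ξ^2)⁻¹ * ‖FT1 ρ ξ‖^2 with hf
  have hH : Hneg1 ρ = (∫ ξ, f ξ)^(1/2:ℝ) := rfl
  clear_value G f
  have h0 : ∀ᵐ ξ : ℝ, ξ ≠ 0 := by
    rw [MeasureTheory.ae_iff]
    have : {ξ : ℝ | ¬ ξ ≠ 0} = {0} := by ext; simp
    rw [this]; exact measure_singleton 0
  have hfval : ∀ ξ : ℝ, ξ ≠ 0 → f ξ = (1 + ξ^2)⁻¹ * ‖F ξ‖^2 := by
    intro ξ hξ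
    rw [hf]
    simp only []
    rw [hform ξ hξ]
  have haeq : f =ᵐ[volume] G := by
    filter_upwards [h0] with ξ hξ
    rw [hfval ξ hξ, hG]
  have hGmeas : Measurable G := by
    have hFm : Measurable F := by
      rw [hF]
      apply Measurable.sub
      · exact measurable_gfun.comp (measurable_const.mul measurable_id)
      · exact measurable_gfun.comp (measurable_const.mul measurable_id)
    rw [hG]
    exact ((measurable_const.add (measurable_id.pow_const 2)).inv).mul (hFm.norm.pow_const 2)
  have hfaesm : AEStronglyMeasurable f volume :=
    (hGmeas.aestronglyMeasurable).congr haeq.symm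
  have ht0 : ∀ ξ : ℝ, ξ ≠ 0 → a₀*ξ ≠ 0 ∧ a₁*ξ ≠ 0 := fun ξ hξ =>
    ⟨mul_ne_zero ha₀.ne' hξ, mul_ne_zero ha₁.ne' hξ⟩
  have hFval : ∀ ξ : ℝ, F ξ = gfun (a₀*ξ) - gfun (a₁*ξ) := by intro ξ; rw [hF]
  have hF2 : ∀ ξ : ℝ, ξ ≠ 0 → ‖F ξ‖ ≤ 2 := by
    intro ξ hξ
    rw [hFval]
    calc ‖gfun (a₀*ξ) - gfun (a₁*ξ)‖ ≤ ‖gfun (a₀*ξ)‖ + ‖gfun (a₁*ξ)‖ := norm_sub_le _ _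
      _ ≤ 1 + 1 := add_le_add (norm_gfun_le_one _ (ht0 ξ hξ).1) (norm_gfun_le_one _ (ht0 ξ hξ).2)
      _ = 2 := by norm_num
  obtain ⟨A, hA⟩ : ∃ A : ℝ, A = 8*Real.pi*a₁ := ⟨_, rfl⟩
  have hApos : 0 < A := by rw [hA]; positivity
  have hFA : ∀ ξ : ℝ, ξ ≠ 0 → ‖F ξ‖ ≤ A * |ξ| := by
    intro ξ hξ
    have e1 := norm_gfun_sub_one_le (a₀*ξ) (ht0 ξ hξ).1
    have e2 := norm_gfun_sub_one_le (a₁*ξ) (ht0 ξ hξ).2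
    rw [abs_mul, abs_of_pos ha₀] at e1
    rw [abs_mul, abs_of_pos ha₁] at e2
    rw [hFval]
    calc ‖gfun (a₀*ξ) - gfun (a₁*ξ)‖ = ‖(gfun (a₀*ξ) - 1) - (gfun (a₁*ξ) - 1)‖ := by
          congr 1; ring
      _ ≤ ‖gfun (a₀*ξ) - 1‖ + ‖gfun (a₁*ξ) - 1‖ := norm_sub_le _ _
      _ ≤ 4*Real.pi*(a₀*|ξ|) + 4*Real.pi*(a₁*|ξ|) := add_le_add e1 e2
      _ ≤ A * |ξ| := by
          rw [hA]
          have h1 := mul_le_mul_of_nonneg_left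
            (mul_le_mul_of_nonneg_right ha01 (abs_nonneg ξ))
            (by positivity : (0:ℝ) ≤ 4*Real.pi)
          linarith [h1]
  have hf_int : Integrable f := by
    apply Integrable.mono' (integrable_inv_one_add_sq.const_mul 4) hfaesm
    filter_upwards [h0] with ξ hξ
    have h1 : (0:ℝ) < 1+ξ^2 := by positivity
    have hb2 := hF2 ξ hξ
    rw [Real.norm_eq_abs, abs_of_nonneg (by rw [hfval ξ hξ]; positivity), hfval ξ hξ]
    have hn := norm_nonneg (F ξ)
    have hsq : ‖F ξ‖^2 ≤ 4 := by nlinarith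
    calc (1 + ξ^2)⁻¹ * ‖F ξ‖^2 ≤ (1 + ξ^2)⁻¹ * 4 :=
          mul_le_mul_of_nonneg_left hsq (by positivity)
      _ = 4 * (1 + ξ^2)⁻¹ := by ring
  obtain ⟨b, hb⟩ : ∃ b : ℝ, b = 4*Real.pi*a₁ := ⟨_, rfl⟩
  have hbpos : 0 < b := by rw [hb]; positivity
  have hbA : b = A/2 := by rw [hA, hb]; ring
  have hh_int : Integrable (fun ξ : ℝ => 2*A^2 * (1+(b*ξ)^2)⁻¹) :=
    ((integrable_inv_one_add_sq).comp_mul_left' hbpos.ne').const_mul _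
  have hfh : ∀ᵐ ξ : ℝ, f ξ ≤ (fun ξ : ℝ => 2*A^2 * (1+(b*ξ)^2)⁻¹) ξ := by
    filter_upwards [h0] with ξ hξ
    have h1 : (0:ℝ) < 1+ξ^2 := by positivity
    have h2 : (0:ℝ) < 1+(b*ξ)^2 := by positivity
    have hu0 : (0:ℝ) ≤ ‖F ξ‖ := norm_nonneg _
    rw [hfval ξ hξ,
      show (1 + ξ^2)⁻¹ * ‖F ξ‖^2 = ‖F ξ‖^2 / (1+ξ^2) by ring,
      show 2*A^2 * (1+(b*ξ)^2)⁻¹ = 2*A^2 / (1+(b*ξ)^2) from (div_eq_mul_inv _ _).symm,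
      div_le_div_iff₀ h1 h2, hbA]
    have hsqa : |ξ|^2 = ξ^2 := sq_abs ξ
    by_cases hcase : A*|ξ| ≤ 2
    · have hu := hFA ξ hξ
      have hu2 : ‖F ξ‖^2 ≤ A^2*ξ^2 := by nlinarith [abs_nonneg ξ]
      have hA2 : A^2*ξ^2 ≤ 4 := by nlinarith [abs_nonneg ξ]
      have hu4 : ‖F ξ‖^2 ≤ 4 := le_trans hu2 hA2
      have p2 : ‖F ξ‖^2*(A^2*ξ^2) ≤ 4*(A^2*ξ^2) :=
        mul_le_mul_of_nonneg_right hu4 (by positivity)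
      nlinarith [sq_nonneg A, sq_nonneg ξ, mul_nonneg (sq_nonneg A) (sq_nonneg ξ)]
    · push_neg at hcase
      have hu := hF2 ξ hξ
      have hu4 : ‖F ξ‖^2 ≤ 4 := by nlinarith
      have hA2 : 4 < A^2*ξ^2 := by nlinarith [abs_nonneg ξ]
      have p2 : ‖F ξ‖^2*(A^2*ξ^2) ≤ 4*(A^2*ξ^2) :=
        mul_le_mul_of_nonneg_right hu4 (by positivity)
      nlinarith [sq_nonneg A, sq_nonneg ξ, mul_nonneg (sq_nonneg A) (sq_nonneg ξ)]
  have hInt_le : ∫ ξ, f ξ ≤ ∫ ξ : ℝ, 2*A^2 * (1+(b*ξ)^2)⁻¹ :=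
    MeasureTheory.integral_mono_ae hf_int hh_int hfh
  have hcomp : ∫ ξ : ℝ, (1+(b*ξ)^2)⁻¹ = |b⁻¹| * Real.pi := by
    have h := MeasureTheory.Measure.integral_comp_mul_left (fun y : ℝ => (1+y^2)⁻¹) b
    rw [h, integral_univ_inv_one_add_sq, smul_eq_mul]
  have hhval : ∫ ξ : ℝ, 2*A^2 * (1+(b*ξ)^2)⁻¹ = 2*A^2*(b⁻¹*Real.pi) := by
    rw [MeasureTheory.integral_const_mul, hcomp, abs_of_pos (inv_pos.mpr hbpos)]
  have hIub : ∫ ξ, f ξ ≤ 324 * a₁ := by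
    have hval2 : 2*A^2*(b⁻¹*Real.pi) = 32*Real.pi^2*a₁ := by
      rw [hA, hb]; field_simp; ring
    calc ∫ ξ, f ξ ≤ 32*Real.pi^2*a₁ := by rw [← hval2, ← hhval]; exact hInt_le
      _ ≤ 324*a₁ := by
          have k : Real.pi*Real.pi ≤ 3.15*3.15 :=
            mul_self_le_mul_self hpi.le hpi315.le
          nlinarith [mul_le_mul_of_nonneg_right k ha₁.le]
  -- lower bound
  have hGlb : ∀ ξ ∈ Set.Icc R (2*R), (2/5)*(1+4*R^2)⁻¹ ≤ G ξ := by
    intro ξ hξmem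
    obtain ⟨hξ1, hξ2⟩ := hξmem
    have hξpos : 0 < ξ := lt_of_lt_of_le hRpos hξ1
    have ht1 : 1 ≤ a₁*ξ := by
      have h := mul_le_mul_of_nonneg_left hξ1 ha₁.le
      have h' : a₁ * R = 1 := by rw [mul_comm]; exact hRa
      linarith
    have e1 : ‖gfun (a₁*ξ)‖ ≤ 1/Real.pi := norm_gfun_le_inv_pi _ ht1
    have e1' : ‖gfun (a₁*ξ)‖ ≤ 8/25 := by
      refine le_trans e1 ?_
      rw [div_le_div_iff₀ hpi (by norm_num)]
      linarith
    have hs_pos : 0 < a₀*ξ := by positivity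
    have hs_le : a₀*ξ ≤ 1/512 := by
      have h := mul_le_mul_of_nonneg_left hξ2 ha₀.le
      linarith [hsmall]
    have hk1 : Real.pi * (a₀*ξ) ≤ 3.15 * (1/512) :=
      mul_le_mul hpi315.le hs_le hs_pos.le (by norm_num)
    have hsmallarg : 2*Real.pi*|a₀*ξ| ≤ 1 := by
      rw [abs_of_pos hs_pos]
      linarith
    have e2 : ‖gfun (a₀*ξ) - 1‖ ≤ 2*Real.pi*|a₀*ξ| :=
      norm_gfun_sub_one_le_small _ hs_pos.ne' hsmallarg
    have e2' : ‖gfun (a₀*ξ) - 1‖ ≤ 1/25 := by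
      rw [abs_of_pos hs_pos] at e2
      linarith
    have hlow : 16/25 ≤ ‖F ξ‖ := by
      rw [hFval]
      have h := norm_sub_norm_le ((1:ℂ) - gfun (a₁*ξ)) ((1:ℂ) - gfun (a₀*ξ))
      have heq : ((1:ℂ) - gfun (a₁*ξ)) - ((1:ℂ) - gfun (a₀*ξ)) = gfun (a₀*ξ) - gfun (a₁*ξ) := by
        ring
      rw [heq] at h
      have t2 : 1 - ‖gfun (a₁*ξ)‖ ≤ ‖(1:ℂ) - gfun (a₁*ξ)‖ := by
        have h' := norm_sub_norm_le (1:ℂ) (gfun (a₁*ξ))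
        simpa using h'
      have t3 : ‖(1:ℂ) - gfun (a₀*ξ)‖ = ‖gfun (a₀*ξ) - 1‖ := norm_sub_rev _ _
      rw [t3] at h
      linarith
    have hFsq : 2/5 ≤ ‖F ξ‖^2 := by
      nlinarith [mul_self_le_mul_self (by norm_num : (0:ℝ) ≤ 16/25) hlow]
    have hinv : (1+4*R^2)⁻¹ ≤ (1+ξ^2)⁻¹ := by
      apply inv_anti₀ (by positivity)
      nlinarith [mul_self_le_mul_self hξpos.le hξ2]
    rw [hG]
    calc (2/5)*(1+4*R^2)⁻¹ ≤ (2/5)*(1+ξ^2)⁻¹ :=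
          mul_le_mul_of_nonneg_left hinv (by norm_num)
      _ ≤ ‖F ξ‖^2 * (1+ξ^2)⁻¹ := mul_le_mul_of_nonneg_right hFsq (by positivity)
      _ = (1+ξ^2)⁻¹ * ‖F ξ‖^2 := by ring
  have hG_int : Integrable G := hf_int.congr haeq
  have hG_nonneg : 0 ≤ᵐ[volume] G := ae_of_all _ (fun ξ => by
    rw [hG]
    positivity)
  have hIlb : (1/16)*a₁ ≤ ∫ ξ, f ξ := by
    rw [MeasureTheory.integral_congr_ae haeq]
    have step1 : ∫ ξ in Set.Icc R (2*R), G ξ ≤ ∫ ξ, G ξ :=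
      MeasureTheory.setIntegral_le_integral hG_int hG_nonneg
    have step2 : ∫ _ξ in Set.Icc R (2*R), ((2/5)*(1+4*R^2)⁻¹ : ℝ)
        ≤ ∫ ξ in Set.Icc R (2*R), G ξ := by
      apply MeasureTheory.setIntegral_mono_on ?_ hG_int.integrableOn measurableSet_Icc hGlb
      apply (MeasureTheory.integrableOn_const_iff).mpr (Or.inr ?_)
      rw [Real.volume_Icc]; exact ENNReal.ofReal_lt_top
    have step3 : ∫ _ξ in Set.Icc R (2*R), ((2/5)*(1+4*R^2)⁻¹ : ℝ)
        = R * ((2/5)*(1+4*R^2)⁻¹) := by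
      rw [MeasureTheory.setIntegral_const, measureReal_def, Real.volume_Icc,
        ENNReal.toReal_ofReal (by linarith : (0:ℝ) ≤ 2*R - R), smul_eq_mul]
      ring
    have ha₁R : a₁ = 1/R := by
      rw [eq_div_iff hRpos.ne']
      linarith [hRa]
    have final : (1/16)*a₁ ≤ R * ((2/5)*(1+4*R^2)⁻¹) := by
      rw [ha₁R,
        show (1/16:ℝ)*(1/R) = 1/(16*R) by ring,
        show R*((2/5)*(1+4*R^2)⁻¹) = (2*R)/(5*(1+4*R^2)) by
          rw [eq_div_iff (by positivity)]; field_simp,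
        div_le_div_iff₀ (by positivity) (by positivity)]
      nlinarith [mul_self_le_mul_self (by norm_num : (0:ℝ) ≤ 2) hR2]
    linarith
  have hint_nonneg : (0:ℝ) ≤ ∫ ξ, f ξ := le_trans (by positivity) hIlb
  constructor
  · rw [hH]
    have h1 := Real.rpow_le_rpow (by positivity) hIlb (by norm_num : (0:ℝ) ≤ 1/2)
    calc (1/4:ℝ) * (2:ℝ)^(-(j₁:ℝ)/2) = ((1/16)*a₁)^(1/2:ℝ) := by
          rw [Real.mul_rpow (by norm_num) ha₁.le]
          congr 1
          · rw [show (1/16:ℝ) = ((1/4:ℝ)^(2:ℕ)) by norm_num,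
              ← Real.rpow_natCast (1/4:ℝ) 2, ← Real.rpow_mul (by norm_num : (0:ℝ) ≤ 1/4)]
            norm_num
          · rw [ha₁def, show -(j₁:ℝ)/2 = (-(j₁:ℝ))*(1/2) by ring,
              Real.rpow_mul two_pos.le]
      _ ≤ (∫ ξ, f ξ)^(1/2:ℝ) := h1
  · rw [hH]
    have h1 := Real.rpow_le_rpow hint_nonneg hIub (by norm_num : (0:ℝ) ≤ 1/2)
    calc (∫ ξ, f ξ)^(1/2:ℝ) ≤ (324*a₁)^(1/2:ℝ) := h1
      _ = 18 * (2:ℝ)^(-(j₁:ℝ)/2) := by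
          rw [Real.mul_rpow (by norm_num) ha₁.le]
          congr 1
          · rw [show (324:ℝ) = ((18:ℝ)^(2:ℕ)) by norm_num,
              ← Real.rpow_natCast (18:ℝ) 2, ← Real.rpow_mul (by norm_num : (0:ℝ) ≤ 18)]
            norm_num
          · rw [ha₁def, show -(j₁:ℝ)/2 = (-(j₁:ℝ))*(1/2) by ring,
              Real.rpow_mul two_pos.le]
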